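/- arXiv:2007.04887 — 2 statements merged into one kernel-verified Lean document; each statement's English description precedes it below -/
import Mathlib

section
/- Let T > 0, let f, g, h : [0,T] → ℝ be continuous functions such that g is nonnegative on [0,T] and h is nondecreasing on [0,T], and let k ≥ 0 be a constant. If f(t) + ∫₀ᵗ g(s) ds ≤ h(t) + k ∫₀ᵗ f(s) ds for all t ∈ [0,T], then f(t) + ∫₀ᵗ g(s) ds ≤ h(t) e^{kt} for all t ∈ [0,T]. -/
open Set MeasureTheory intervalIntegral Filter Topology

/-- Modified Grönwall's lemma: if `f t + ∫₀ᵗ g ≤ h t + k ∫₀ᵗ f` on `[0, T]`,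
with `g` nonnegative, `h` nondecreasing, `k ≥ 0` and `f, g, h` continuous,
then `f t + ∫₀ᵗ g ≤ h t * exp (k t)` on `[0, T]`. -/
theorem modified_gronwall
    (T : ℝ) (hT : 0 < T)
    (f g h : ℝ → ℝ)
    (hf : ContinuousOn f (Set.Icc 0 T))
    (hg : ContinuousOn g (Set.Icc 0 T))
    (hh : ContinuousOn h (Set.Icc 0 T))
    (hg0 : ∀ t ∈ Set.Icc (0:ℝ) T, 0 ≤ g t)
    (hhmono : MonotoneOn h (Set.Icc 0 T))
    (k : ℝ) (hk : 0 ≤ k)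
    (hyp : ∀ t ∈ Set.Icc (0:ℝ) T,
      f t + ∫ s in (0:ℝ)..t, g s ≤ h t + k * ∫ s in (0:ℝ)..t, f s) :
    ∀ t ∈ Set.Icc (0:ℝ) T,
      f t + ∫ s in (0:ℝ)..t, g s ≤ h t * Real.exp (k * t) := by
  intro t ht
  obtain ⟨ht0, htT⟩ := ht
  set F : ℝ → ℝ := fun u => f u + ∫ v in (0:ℝ)..u, g v with hFdef
  -- continuity of the primitive of g, hence of F
  have hgint : IntegrableOn g (Set.Icc 0 T) := hg.integrableOn_Icc
  have hGcont : ContinuousOn (fun u => ∫ v in (0:ℝ)..u, g v) (Set.Icc 0 T) := by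
    have := intervalIntegral.continuousOn_primitive_interval (a := 0) (b := T)
      (f := g) (μ := volume) (by rwa [Set.uIcc_of_le hT.le])
    rwa [Set.uIcc_of_le hT.le] at this
  have hFcont : ContinuousOn F (Set.Icc 0 T) := hf.add hGcont
  have hFint : ∀ x ∈ Set.Icc (0:ℝ) T, IntervalIntegrable F volume 0 x := fun x hx =>
    (hFcont.mono (Set.Icc_subset_Icc le_rfl hx.2)).intervalIntegrable_of_Icc hx.1
  have hfint : ∀ x ∈ Set.Icc (0:ℝ) T, IntervalIntegrable f volume 0 x := fun x hx =>
    (hf.mono (Set.Icc_subset_Icc le_rfl hx.2)).intervalIntegrable_of_Icc hx.1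
  set y : ℝ → ℝ := fun s => ∫ u in (0:ℝ)..s, F u with hydef
  have hycont : ContinuousOn y (Set.Icc 0 t) := by
    have := intervalIntegral.continuousOn_primitive_interval (a := 0) (b := t)
      (f := F) (μ := volume)
      (by rw [Set.uIcc_of_le ht0]
          exact (hFcont.mono (Set.Icc_subset_Icc le_rfl htT)).integrableOn_Icc)
    rwa [Set.uIcc_of_le ht0] at this
  -- f ≤ F pointwise on [0, T]
  have hfF : ∀ x ∈ Set.Icc (0:ℝ) T, f x ≤ F x := by
    intro x hx
    have h0 : 0 ≤ ∫ v in (0:ℝ)..x, g v :=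
      intervalIntegral.integral_nonneg hx.1 fun v hv => hg0 v ⟨hv.1, hv.2.trans hx.2⟩
    show f x ≤ f x + _
    exact le_add_of_nonneg_right h0
  -- the differential inequality bound
  have bound : ∀ x ∈ Set.Ico (0:ℝ) t, F x ≤ k * y x + h t := by
    intro x hx
    have hxT : x ∈ Set.Icc (0:ℝ) T := ⟨hx.1, (hx.2.le.trans htT)⟩
    have h1 : F x ≤ h x + k * ∫ s in (0:ℝ)..x, f s := hyp x hxT
    have h2 : (∫ s in (0:ℝ)..x, f s) ≤ y x := by
      apply intervalIntegral.integral_mono_on hx.1 (hfint x hxT) (hFint x hxT)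
      intro u hu
      exact hfF u ⟨hu.1, hu.2.trans hxT.2⟩
    have h3 : h x ≤ h t := hhmono hxT ⟨ht0, htT⟩ hx.2.le
    calc F x ≤ h x + k * ∫ s in (0:ℝ)..x, f s := h1
      _ ≤ h t + k * y x := add_le_add h3 (mul_le_mul_of_nonneg_left h2 hk)
      _ = k * y x + h t := add_comm _ _
  -- derivative of y
  have hderiv : ∀ x ∈ Set.Ico (0:ℝ) t, HasDerivWithinAt y (F x) (Set.Ici x) x := by
    intro x hx
    have hxltT : x < T := lt_of_lt_of_le hx.2 htT
    have hxT : x ∈ Set.Icc (0:ℝ) T := ⟨hx.1, hxltT.le⟩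
    have hmemIoi : Set.Icc (0:ℝ) T ∈ 𝓝[>] x := by
      apply Filter.mem_of_superset
        (Filter.inter_mem self_mem_nhdsWithin
          (nhdsWithin_le_nhds (isOpen_Iio.mem_nhds hxltT)))
      rintro u ⟨hu1, hu2⟩
      exact ⟨hx.1.trans (le_of_lt hu1), le_of_lt hu2⟩
    have hmeas : StronglyMeasurableAtFilter F (𝓝[>] x) :=
      ⟨Set.Icc 0 T, hmemIoi, (hFcont.aestronglyMeasurable measurableSet_Icc)⟩
    have hcw : ContinuousWithinAt F (Set.Ioi x) x :=
      (hFcont x hxT).mono_of_mem_nhdsWithin hmemIoi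
    exact intervalIntegral.integral_hasDerivWithinAt_right (hFint x hxT) hmeas hcw
  -- apply Grönwall
  have key : ∀ x ∈ Set.Icc (0:ℝ) t, y x ≤ gronwallBound 0 k (h t) (x - 0) := by
    apply le_gronwallBound_of_liminf_deriv_right_le hycont
    · intro x hx r hr
      refine ((hderiv x hx).liminf_right_slope_le hr).mono fun z hz => ?_
      rwa [slope_def_field, div_eq_inv_mul] at hz
    · simp [hydef]
    · exact bound
  have hyt : y t ≤ gronwallBound 0 k (h t) t := by
    simpa using key t ⟨ht0, le_rfl⟩
  -- conclude
  have h2 : (∫ s in (0:ℝ)..t, f s) ≤ y t := by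
    apply intervalIntegral.integral_mono_on ht0 (hfint t ⟨ht0, htT⟩) (hFint t ⟨ht0, htT⟩)
    intro u hu
    exact hfF u ⟨hu.1, hu.2.trans htT⟩
  have hmain : f t + (∫ s in (0:ℝ)..t, g s) ≤ h t + k * gronwallBound 0 k (h t) t := by
    calc f t + (∫ s in (0:ℝ)..t, g s) ≤ h t + k * ∫ s in (0:ℝ)..t, f s := hyp t ⟨ht0, htT⟩
      _ ≤ h t + k * y t := by
          exact add_le_add_right (mul_le_mul_of_nonneg_left h2 hk) _
      _ ≤ h t + k * gronwallBound 0 k (h t) t := by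
          exact add_le_add_right (mul_le_mul_of_nonneg_left hyt hk) _
  refine hmain.trans (le_of_eq ?_)
  rcases eq_or_ne k 0 with hk0 | hk0
  · simp [hk0, gronwallBound_K0]
  · rw [gronwallBound_of_K_ne_0 hk0]
    field_simp
    ring
end

section
/- The map u ↦ u uᵀ/|u| from ℝ^n \ {0} to the n×n real matrices is Lipschitz with constant 3: for all nonzero u, v ∈ ℝ^n, the operator norm satisfies ‖u uᵀ/|u| − v vᵀ/|v|‖ ≤ 3 |u − v|. -/
open Matrix

/-- The operator norm of a matrix acting on the Euclidean space `ℝⁿ`. -/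
noncomputable def l2OpNorm {n : ℕ} (M : Matrix (Fin n) (Fin n) ℝ) : ℝ :=
  ‖LinearMap.toContinuousLinearMap (Matrix.toEuclideanLin M)‖

lemma rankOne_apply (n : ℕ) (u x : EuclideanSpace ℝ (Fin n)) (c : ℝ) :
    Matrix.toEuclideanLin (Matrix.of fun i j => u i * u j / c) x
      = ((inner ℝ u x : ℝ)/c) • u := by
  ext i
  simp [Matrix.toEuclideanLin, Matrix.mulVec, dotProduct, PiLp.inner_apply,
    Finset.mul_sum, Finset.sum_div, mul_comm, mul_div_assoc]
  exact Finset.sum_congr rfl fun j _ => by ring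

lemma key (n : ℕ) (u v : EuclideanSpace ℝ (Fin n)) (hu : u ≠ 0) (hv : v ≠ 0)
    (hle : ‖v‖ ≤ ‖u‖) :
    l2OpNorm ((Matrix.of fun i j => u i * u j / ‖u‖)
        - (Matrix.of fun i j => v i * v j / ‖v‖))
      ≤ 3 * ‖u - v‖ := by
  have hnu : (0:ℝ) < ‖u‖ := norm_pos_iff.mpr hu
  have hnv : (0:ℝ) < ‖v‖ := norm_pos_iff.mpr hv
  apply ContinuousLinearMap.opNorm_le_bound _ (by positivity)
  intro x
  have hT : (LinearMap.toContinuousLinearMap (Matrix.toEuclideanLin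
      ((Matrix.of fun i j => u i * u j / ‖u‖) - (Matrix.of fun i j => v i * v j / ‖v‖)))) x
      = ((inner ℝ u x : ℝ)/‖u‖) • u - ((inner ℝ v x : ℝ)/‖v‖) • v := by
    simp only [map_sub, ContinuousLinearMap.sub_apply, LinearMap.coe_toContinuousLinearMap',
      rankOne_apply]
  rw [hT]
  set a : ℝ := inner ℝ u x with ha
  set b : ℝ := inner ℝ v x with hb
  have decomp : (a/‖u‖) • u - (b/‖v‖) • v
      = ((a-b)/‖u‖) • u + (b/‖u‖) • (u-v) + (b*(1/‖u‖ - 1/‖v‖)) • v := by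
    match_scalars <;> field_simp <;> ring
  have habx : |b| ≤ ‖v‖ * ‖x‖ := abs_real_inner_le_norm v x
  have h1 : ‖((a-b)/‖u‖) • u‖ ≤ ‖u - v‖ * ‖x‖ := by
    rw [norm_smul, Real.norm_eq_abs, abs_div, abs_of_pos hnu, div_mul_cancel₀ _ hnu.ne']
    have : a - b = inner ℝ (u - v) x := by rw [ha, hb, inner_sub_left]
    rw [this]
    exact abs_real_inner_le_norm _ _
  have h2 : ‖(b/‖u‖) • (u-v)‖ ≤ ‖u - v‖ * ‖x‖ := by
    rw [norm_smul, Real.norm_eq_abs, abs_div, abs_of_pos hnu]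
    calc |b| / ‖u‖ * ‖u - v‖ ≤ (‖v‖ * ‖x‖) / ‖u‖ * ‖u - v‖ := by
          gcongr
      _ ≤ ‖u - v‖ * ‖x‖ := by
          rw [div_mul_eq_mul_div, div_le_iff₀ hnu]
          nlinarith [mul_le_mul_of_nonneg_right hle
            (mul_nonneg (norm_nonneg x) (norm_nonneg (u - v)))]
  have h3 : ‖(b*(1/‖u‖ - 1/‖v‖)) • v‖ ≤ ‖u - v‖ * ‖x‖ := by
    rw [norm_smul, Real.norm_eq_abs, abs_mul]
    have hd : |1/‖u‖ - 1/‖v‖| ≤ ‖u - v‖ / (‖u‖ * ‖v‖) := by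
      have h0 : 1/‖u‖ - 1/‖v‖ = (‖v‖ - ‖u‖)/(‖u‖ * ‖v‖) := by field_simp
      rw [h0, abs_div, abs_of_pos (mul_pos hnu hnv)]
      gcongr
      rw [abs_sub_comm]
      exact abs_norm_sub_norm_le u v
    calc |b| * |1/‖u‖ - 1/‖v‖| * ‖v‖
        ≤ (‖v‖ * ‖x‖) * (‖u - v‖ / (‖u‖ * ‖v‖)) * ‖v‖ := by
          gcongr
      _ = (‖v‖ / ‖u‖) * (‖u - v‖ * ‖x‖) := by field_simp
      _ ≤ 1 * (‖u - v‖ * ‖x‖) :=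
          mul_le_mul_of_nonneg_right ((div_le_one hnu).mpr hle) (by positivity)
      _ = ‖u - v‖ * ‖x‖ := one_mul _
  calc ‖(a/‖u‖) • u - (b/‖v‖) • v‖
      = ‖((a-b)/‖u‖) • u + (b/‖u‖) • (u-v) + (b*(1/‖u‖ - 1/‖v‖)) • v‖ := by rw [decomp]
    _ ≤ ‖((a-b)/‖u‖) • u + (b/‖u‖) • (u-v)‖ + ‖(b*(1/‖u‖ - 1/‖v‖)) • v‖ := norm_add_le _ _
    _ ≤ ‖((a-b)/‖u‖) • u‖ + ‖(b/‖u‖) • (u-v)‖ + ‖(b*(1/‖u‖ - 1/‖v‖)) • v‖ := by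
        gcongr; exact norm_add_le _ _
    _ ≤ ‖u - v‖ * ‖x‖ + ‖u - v‖ * ‖x‖ + ‖u - v‖ * ‖x‖ := by gcongr
    _ = 3 * ‖u - v‖ * ‖x‖ := by ring

/-- The map `u ↦ u uᵀ / |u|` is Lipschitz with constant `3` on `ℝⁿ \ {0}`:
for all nonzero `u, v`, `‖u uᵀ/|u| − v vᵀ/|v|‖ ≤ 3 |u − v|` in the operator
norm of matrices acting on the Euclidean space `ℝⁿ`. -/
theorem rank_one_over_norm_lipschitz
    (n : ℕ) (u v : EuclideanSpace ℝ (Fin n)) (hu : u ≠ 0) (hv : v ≠ 0) :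
    l2OpNorm ((Matrix.of fun i j => u i * u j / ‖u‖)
        - (Matrix.of fun i j => v i * v j / ‖v‖))
      ≤ 3 * ‖u - v‖ := by
  rcases le_total ‖v‖ ‖u‖ with h | h
  · exact key n u v hu hv h
  · have hsym : l2OpNorm ((Matrix.of fun i j => u i * u j / ‖u‖)
        - (Matrix.of fun i j => v i * v j / ‖v‖))
      = l2OpNorm ((Matrix.of fun i j => v i * v j / ‖v‖)
        - (Matrix.of fun i j => u i * u j / ‖u‖)) := by
      unfold l2OpNorm
      rw [show (Matrix.of fun i j => u i * u j / ‖u‖)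
          - (Matrix.of fun i j => v i * v j / ‖v‖)
          = -((Matrix.of fun i j => v i * v j / ‖v‖)
          - (Matrix.of fun i j => u i * u j / ‖u‖)) from (neg_sub _ _).symm,
        map_neg, map_neg, norm_neg]
    rw [hsym, norm_sub_rev]
    exact key n v u hv hu h
end
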